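/- arXiv:1701.07118 — 8 statements merged into one kernel-verified Lean document; each statement's English description precedes it below -/
import Mathlib

section
/- Let B = GF(q) with q = p^m and F = GF(q^t). For any u, α ∈ F, the polynomial p_{u,α}(X) satisfies p_{u,α}(α) = u. -/
open Polynomial

/-- The polynomial `p_{u,α}` satisfies `p_{u,α}(α) = u`. -/
theorem check_polynomial_eval_center (p m t : ℕ) (hp : p.Prime) (hm : 1 ≤ m) (ht : 1 ≤ t)
    (F : Type*) [Field F] [Fintype F] (hF : Fintype.card F = (p ^ m) ^ t)
    (u α : F)
    (P : F[X])
    (hP : (X - C α) * P = ∑ i ∈ Finset.range t, (C u * (X - C α)) ^ ((p ^ m) ^ i)) :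
    P.eval α = u := by
  set q := p ^ m with hq
  have hq2 : 2 ≤ q := Nat.one_lt_pow (by omega) hp.one_lt
  have hqi1 : ∀ i : ℕ, 1 ≤ q ^ i := fun i => Nat.one_le_pow _ _ (by omega)
  have key : ∀ i : ℕ, (C u * (X - C α)) ^ (q ^ i)
      = (X - C α) * ((C u) ^ (q ^ i) * (X - C α) ^ (q ^ i - 1)) := by
    intro i
    have h1 : (X - C α : F[X]) ^ (q ^ i) = (X - C α) * (X - C α) ^ (q ^ i - 1) := by
      conv_lhs => rw [show q ^ i = 1 + (q ^ i - 1) by have := hqi1 i; omega]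
      rw [pow_add, pow_one]
    rw [mul_pow, h1]; ring
  rw [Finset.sum_congr rfl (fun i _ => key i), ← Finset.mul_sum] at hP
  have hX : (X - C α : F[X]) ≠ 0 := X_sub_C_ne_zero α
  have hP' : P = ∑ i ∈ Finset.range t, (C u) ^ (q ^ i) * (X - C α) ^ (q ^ i - 1) :=
    mul_left_cancel₀ hX hP
  rw [hP']
  simp only [eval_finset_sum, eval_mul, eval_pow, eval_C, eval_sub, eval_X, sub_self]
  rw [Finset.sum_eq_single 0]
  · simp
  · intro i _ hi
    have : q ^ i - 1 ≠ 0 := by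
      have : 2 ≤ q ^ i := le_trans hq2 (Nat.le_self_pow hi q)
      omega
    simp [zero_pow this]
  · intro h
    exact absurd (Finset.mem_range.mpr ht) h
end

section
/- Let B = GF(q) with q = p^m, F = GF(q^t), and Tr the trace from F to B. For any u ∈ F, any distinct α, α* ∈ F, and any c ∈ F, one has Tr(p_{u,α*}(α)·c) = Tr(u(α-α*)) · Tr(c·(α-α*)^{-1}), where the product on the right is taken in B ⊆ F. -/
open Polynomial

/-- `Tr(p_{u,α*}(α)·c) = Tr(u(α-α*)) · Tr(c·(α-α*)⁻¹)` for `α ≠ α*`. -/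
theorem trace_check_mul (p m t : ℕ) (hp : p.Prime) (hm : 1 ≤ m) (ht : 1 ≤ t)
    (F : Type*) [Field F] [Fintype F] (hF : Fintype.card F = (p ^ m) ^ t)
    (u αs α c : F) (hne : α ≠ αs)
    (P : F[X])
    (hP : (X - C αs) * P = ∑ i ∈ Finset.range t, (C u * (X - C αs)) ^ ((p ^ m) ^ i)) :
    ∑ i ∈ Finset.range t, (P.eval α * c) ^ ((p ^ m) ^ i) =
      (∑ i ∈ Finset.range t, (u * (α - αs)) ^ ((p ^ m) ^ i)) *
        (∑ i ∈ Finset.range t, (c * (α - αs)⁻¹) ^ ((p ^ m) ^ i)) := by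
  -- characteristic
  haveI : Fact p.Prime := ⟨hp⟩
  obtain ⟨n, hr, hcard⟩ := FiniteField.card F (ringChar F)
  have hrp : (ringChar F : ℕ) = p := by
    have hdvd : (ringChar F) ∣ p ^ (m * t) := by
      rw [← pow_mul] at hF
      rw [← hF, hcard]
      exact dvd_pow_self _ n.2.ne'
    exact (Nat.prime_dvd_prime_iff_eq hr hp).mp (hr.dvd_of_dvd_pow hdvd)
  haveI hchar : CharP F p := hrp ▸ ringChar.charP F
  haveI : ExpChar F p := ExpChar.prime hp
  set q := p ^ m with hq
  set x := u * (α - αs) with hx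
  set S := ∑ i ∈ Finset.range t, x ^ q ^ i with hS
  have hxt : x ^ q ^ t = x := by
    rw [← hF]; exact FiniteField.pow_card x
  -- S is Frobenius-fixed
  have hSq : S ^ q = S := by
    rw [hS, hq, sum_pow_char_pow]
    have : ∀ i, (x ^ (p ^ m) ^ i) ^ p ^ m = x ^ q ^ (i + 1) := by
      intro i
      rw [← pow_mul, ← pow_succ]
    rw [Finset.sum_congr rfl fun i _ => this i]
    have h1 : ∑ i ∈ Finset.range t, x ^ q ^ (i + 1)
        = (∑ i ∈ Finset.range (t + 1), x ^ q ^ i) - x ^ q ^ 0 := by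
      rw [Finset.sum_range_succ']; ring
    rw [h1, Finset.sum_range_succ, hxt]
    simp
    rfl
  have hSqi : ∀ i, S ^ q ^ i = S := by
    intro i
    induction i with
    | zero => simp
    | succ k ih => rw [pow_succ, pow_mul, ih, hSq]
  -- evaluate hP at α
  have hPa : (α - αs) * P.eval α = S := by
    have := congrArg (Polynomial.eval α) hP
    simpa [hS, hx, hq, Polynomial.eval_finset_sum] using this
  have hsub : α - αs ≠ 0 := sub_ne_zero.mpr hne
  have hPev : P.eval α = S * (α - αs)⁻¹ := by
    field_simp at hPa ⊢
    linear_combination hPa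
  rw [hPev]
  rw [Finset.mul_sum]
  refine Finset.sum_congr rfl fun i _ => ?_
  rw [mul_pow, mul_pow, hSqi i]
  ring
end

section
/- Let B = GF(q) with q = p^m, F = GF(q^t), and Tr the trace from F to B. Let k ≤ |F| - q^{t-1}. Then for any u ∈ F, any α* ∈ F, and any polynomial f ∈ F[X] with deg(f) < k, the repair equation Tr(u·f(α*)) = - Σ_{α ∈ F, α ≠ α*} Tr(u(α-α*)) · Tr(f(α)·(α-α*)^{-1}) holds. -/
open Polynomial

/-- The Guruswami–Wootters repair equation:
`Tr(u·f(α*)) = - ∑_{α ≠ α*} Tr(u(α-α*)) · Tr(f(α)·(α-α*)⁻¹)`. -/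
theorem repair_equation (p m t k : ℕ) (hp : p.Prime) (hm : 1 ≤ m) (ht : 1 ≤ t)
    (F : Type*) [Field F] [Fintype F] [DecidableEq F] (hF : Fintype.card F = (p ^ m) ^ t)
    (hk : k ≤ Fintype.card F - (p ^ m) ^ (t - 1))
    (u αs : F)
    (f : F[X]) (hf : f.degree < (k : WithBot ℕ)) :
    ∑ i ∈ Finset.range t, (u * f.eval αs) ^ ((p ^ m) ^ i) =
      -∑ α ∈ Finset.univ.erase αs,
        (∑ i ∈ Finset.range t, (u * (α - αs)) ^ ((p ^ m) ^ i)) *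
          (∑ i ∈ Finset.range t, (f.eval α * (α - αs)⁻¹) ^ ((p ^ m) ^ i)) := by
  classical
  haveI : Fact p.Prime := ⟨hp⟩
  set q : ℕ := p ^ m with hqdef
  have hq2 : 2 ≤ q := by
    calc 2 ≤ p := hp.two_le
    _ = p ^ 1 := (pow_one p).symm
    _ ≤ p ^ m := Nat.pow_le_pow_right hp.pos hm
  -- characteristic
  haveI hcharp : CharP F p := by
    have h1 : (ringChar F).Prime := CharP.char_is_prime F (ringChar F)
    obtain ⟨n, hn⟩ := FiniteField.card F (ringChar F)
    have hdvd : ringChar F ∣ p ^ (m * t) := by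
      rw [pow_mul, ← hqdef, ← hF, hn.2]
      exact dvd_pow_self _ (by exact_mod_cast n.ne_zero)
    have : ringChar F = p :=
      (Nat.prime_dvd_prime_iff_eq h1 hp).mp (h1.dvd_of_dvd_pow hdvd)
    rw [← this]; exact ringChar.charP F
  -- the trace function
  set Tr : F → F := fun x => ∑ j ∈ Finset.range t, x ^ q ^ j with hTr
  have hpowhom : ∀ (x : F) (j : ℕ), x ^ q ^ j = iterateFrobenius F p (m * j) x := by
    intro x j
    rw [iterateFrobenius_def, pow_mul]
  have hqpos : ∀ i : ℕ, 1 ≤ q ^ i := fun i => Nat.one_le_pow _ _ (by omega)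
  -- Tr is fixed by the q-power Frobenius
  have hfix1 : ∀ x : F, (Tr x) ^ q = Tr x := by
    intro x
    have hmap : (Tr x) ^ q = ∑ j ∈ Finset.range t, (x ^ q ^ j) ^ q := by
      have h := map_sum (iterateFrobenius F p m) (fun j => x ^ q ^ j) (Finset.range t)
      simp only [iterateFrobenius_def] at h
      exact h
    have hterm : ∀ j, (x ^ q ^ j) ^ q = x ^ q ^ (j + 1) := by
      intro j; rw [← pow_mul, ← pow_succ]
    rw [hmap]
    simp only [hterm]
    have hxt : x ^ q ^ t = x := by rw [← hF]; exact FiniteField.pow_card x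
    have h1 : ∑ j ∈ Finset.range t, x ^ q ^ (j + 1) + x ^ q ^ 0 =
        ∑ j ∈ Finset.range t, x ^ q ^ j + x ^ q ^ t := by
      rw [← Finset.sum_range_succ' (fun j => x ^ q ^ j) t, Finset.sum_range_succ]
    rw [hxt, pow_zero, pow_one] at h1
    exact add_right_cancel h1
  have hfix : ∀ (x : F) (j : ℕ), (Tr x) ^ q ^ j = Tr x := by
    intro x j
    induction j with
    | zero => simp
    | succ n ih => rw [pow_succ, pow_mul, ih, hfix1]
  -- Tr pulls out trace-valued scalars
  have hTr_smul : ∀ x y : F, Tr (Tr x * y) = Tr x * Tr y := by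
    intro x y
    rw [hTr]
    simp only [mul_pow, show ∀ j, (∑ j ∈ Finset.range t, x ^ q ^ j) ^ q ^ j = ∑ j ∈ Finset.range t, x ^ q ^ j from hfix x]
    rw [← Finset.mul_sum]
  -- Tr of a finite sum
  have hTr_sum : ∀ (s : Finset F) (h : F → F), Tr (∑ a ∈ s, h a) = ∑ a ∈ s, Tr (h a) := by
    intro s h
    rw [hTr]
    simp only [hpowhom, map_sum]
    exact Finset.sum_comm
  have hTr_neg : ∀ x : F, Tr (-x) = -Tr x := by
    intro x
    rw [hTr]
    simp only [hpowhom, map_neg]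
    exact Finset.sum_neg_distrib _
  -- vanishing of sums of evaluations of low-degree polynomials
  have hsum_eval : ∀ P : F[X], P.degree < ((Fintype.card F - 1 : ℕ) : WithBot ℕ) →
      ∑ α : F, P.eval α = 0 := by
    intro P hP
    rcases eq_or_ne P 0 with rfl | hP0
    · simp
    have hnd : P.natDegree < Fintype.card F - 1 :=
      (Polynomial.natDegree_lt_iff_degree_lt hP0).mpr hP
    calc ∑ α : F, P.eval α
        = ∑ α : F, ∑ i ∈ Finset.range (P.natDegree + 1), P.coeff i * α ^ i := by
          refine Finset.sum_congr rfl fun α _ => ?_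
          exact Polynomial.eval_eq_sum_range α
      _ = ∑ i ∈ Finset.range (P.natDegree + 1), P.coeff i * ∑ α : F, α ^ i := by
          rw [Finset.sum_comm]
          simp [Finset.mul_sum]
      _ = 0 := by
          refine Finset.sum_eq_zero fun i hi => ?_
          rw [FiniteField.sum_pow_lt_card_sub_one F i ?_, mul_zero]
          have := Finset.mem_range.mp hi
          omega
  -- the auxiliary polynomial g
  set g : F[X] := ∑ i ∈ Finset.range t, C (u ^ q ^ i) * (X - C αs) ^ (q ^ i - 1) with hg
  have hg_eval : ∀ α : F, g.eval α = ∑ i ∈ Finset.range t, u ^ q ^ i * (α - αs) ^ (q ^ i - 1) := by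
    intro α
    rw [hg, Polynomial.eval_finset_sum]
    simp
  have hg_alphas : g.eval αs = u := by
    rw [hg_eval]
    rw [Finset.sum_eq_single_of_mem 0 (Finset.mem_range.mpr (by omega))]
    · simp
    · intro i _ hi0
      have : 0 < q ^ i - 1 := by
        have : q ^ i ≥ q ^ 1 := Nat.pow_le_pow_right (by omega) (by omega)
        simp at this ⊢
        omega
      simp [sub_self, zero_pow this.ne']
  have hg_eval' : ∀ α : F, α ≠ αs → g.eval α = Tr (u * (α - αs)) * (α - αs)⁻¹ := by
    intro α hα
    have hne : α - αs ≠ 0 := sub_ne_zero.mpr hα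
    rw [hg_eval, hTr, Finset.sum_mul]
    refine Finset.sum_congr rfl fun i _ => ?_
    have h1 : (α - αs) ^ q ^ i = (α - αs) ^ (q ^ i - 1) * (α - αs) := by
      rw [← pow_succ]
      congr 1
      have := hqpos i; omega
    rw [mul_pow, h1]
    field_simp
  -- degree bound on g
  have hdeg_g : g.degree ≤ ((q ^ (t - 1) - 1 : ℕ) : WithBot ℕ) := by
    rw [hg]
    refine (Polynomial.degree_sum_le _ _).trans ?_
    rw [Finset.sup_le_iff]
    intro i hi
    refine (Polynomial.degree_mul_le _ _).trans ?_
    calc (C (u ^ q ^ i)).degree + ((X - C αs) ^ (q ^ i - 1)).degree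
        ≤ 0 + ((X - C αs) ^ (q ^ i - 1)).degree :=
          add_le_add Polynomial.degree_C_le le_rfl
      _ = ((q ^ i - 1 : ℕ) : WithBot ℕ) := by
          rw [zero_add, Polynomial.degree_pow, Polynomial.degree_X_sub_C]
          simp [nsmul_eq_mul, mul_one]
      _ ≤ ((q ^ (t - 1) - 1 : ℕ) : WithBot ℕ) := by
          have hile : i ≤ t - 1 := by have := Finset.mem_range.mp hi; omega
          have : q ^ i ≤ q ^ (t - 1) := Nat.pow_le_pow_right (by omega) hile
          exact_mod_cast Nat.sub_le_sub_right this 1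
  -- dispatch the trivial case f = 0
  rcases eq_or_ne f 0 with rfl | hf0
  · have hz : ∀ i : ℕ, (0 : F) ^ q ^ i = 0 := fun i => zero_pow (by have := hqpos i; omega)
    simp only [Polynomial.eval_zero, mul_zero, zero_mul, hz]
    simp
  have hndf : f.natDegree < k := (Polynomial.natDegree_lt_iff_degree_lt hf0).mpr hf
  have hqt : q ^ (t - 1) ≤ q ^ t := Nat.pow_le_pow_right (by omega) (by omega)
  have hqt1 : 1 ≤ q ^ (t - 1) := hqpos _
  have hcard2 : 2 ≤ Fintype.card F := by
    rw [hF]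
    calc 2 ≤ q := hq2
    _ = q ^ 1 := (pow_one q).symm
    _ ≤ q ^ t := Nat.pow_le_pow_right (by omega) ht
  -- degree bound for g * f
  have hdeg : (g * f).degree < ((Fintype.card F - 1 : ℕ) : WithBot ℕ) := by
    refine (Polynomial.degree_mul_le _ _).trans_lt ?_
    calc g.degree + f.degree
        ≤ ((q ^ (t - 1) - 1 : ℕ) : WithBot ℕ) + ((f.natDegree : ℕ) : WithBot ℕ) :=
          add_le_add hdeg_g Polynomial.degree_le_natDegree
      _ = (((q ^ (t - 1) - 1) + f.natDegree : ℕ) : WithBot ℕ) := by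
          rw [Nat.cast_add]
      _ < ((Fintype.card F - 1 : ℕ) : WithBot ℕ) := by
          have hF' : Fintype.card F = q ^ t := hF
          exact_mod_cast (by omega : (q ^ (t - 1) - 1) + f.natDegree < Fintype.card F - 1)
  -- parity check: the full sum vanishes
  have hzero : ∑ α : F, g.eval α * f.eval α = 0 := by
    have h := hsum_eval (g * f) hdeg
    simpa using h
  have hsplit := Finset.sum_erase_add Finset.univ
    (fun α => g.eval α * f.eval α) (Finset.mem_univ αs)
  beta_reduce at hsplit
  rw [hg_alphas, hzero] at hsplit
  have h2 : u * f.eval αs = -(∑ α ∈ Finset.univ.erase αs, g.eval α * f.eval α) := by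
    linear_combination hsplit
  show Tr (u * f.eval αs) =
      -∑ α ∈ Finset.univ.erase αs, Tr (u * (α - αs)) * Tr (f.eval α * (α - αs)⁻¹)
  calc Tr (u * f.eval αs)
      = Tr (-(∑ α ∈ Finset.univ.erase αs, g.eval α * f.eval α)) := by rw [← h2]
    _ = -Tr (∑ α ∈ Finset.univ.erase αs, g.eval α * f.eval α) := hTr_neg _
    _ = -∑ α ∈ Finset.univ.erase αs, Tr (g.eval α * f.eval α) := by rw [hTr_sum]
    _ = -∑ α ∈ Finset.univ.erase αs, Tr (u * (α - αs)) * Tr (f.eval α * (α - αs)⁻¹) := by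
        congr 1
        refine Finset.sum_congr rfl fun α hα => ?_
        have hα' : α ≠ αs := Finset.ne_of_mem_erase hα
        rw [hg_eval' α hα']
        have h3 : Tr (u * (α - αs)) * (α - αs)⁻¹ * f.eval α =
            Tr (u * (α - αs)) * (f.eval α * (α - αs)⁻¹) := by ring
        rw [h3, hTr_smul]
end

section
/- (Guruswami–Wootters single-erasure repair, full-length case.) Let B = GF(q) with q = p^m, F = GF(q^t), and Tr the trace from F to B, and let k ≤ |F| - q^{t-1}. Let α* ∈ F. If f, g ∈ F[X] both have degree less than k, and Tr(f(α)·(α-α*)^{-1}) = Tr(g(α)·(α-α*)^{-1}) for every α ∈ F with α ≠ α*, then f(α*) = g(α*). In other words, the erased codeword symbol f(α*) of a codeword of RS(F,k) is uniquely determined by the n-1 repair traces Tr(f(α)/(α-α*)), α ≠ α*, each of which is a single sub-symbol of B. -/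
open Polynomial Finset

/-- Sum of a low-degree polynomial over all of a finite field vanishes. -/
lemma GW_sum_eval_eq_zero {F : Type*} [Field F] [Fintype F] (r : F[X])
    (h : r.natDegree < Fintype.card F - 1) : ∑ α : F, r.eval α = 0 := by
  classical
  calc ∑ α : F, r.eval α
      = ∑ α : F, ∑ j ∈ Finset.range (Fintype.card F - 1), r.coeff j * α ^ j := by
        refine Finset.sum_congr rfl fun α _ => ?_
        exact eval_eq_sum_range' h α
    _ = ∑ j ∈ Finset.range (Fintype.card F - 1), ∑ α : F, r.coeff j * α ^ j :=
        Finset.sum_comm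
    _ = 0 := by
        refine Finset.sum_eq_zero fun j hj => ?_
        rw [← Finset.mul_sum, FiniteField.sum_pow_lt_card_sub_one F j (Finset.mem_range.mp hj),
          mul_zero]

/-- Guruswami–Wootters single-erasure repair (full-length case): the erased symbol
`f(α*)` of a codeword of `RS(F,k)`, `k ≤ |F| - q^{t-1}`, is uniquely determined by
the repair traces `Tr(f(α)·(α-α*)⁻¹)`, `α ≠ α*`. -/
theorem single_erasure_repair (p m t k : ℕ) (hp : p.Prime) (hm : 1 ≤ m) (ht : 1 ≤ t)
    (F : Type*) [Field F] [Fintype F] (hF : Fintype.card F = (p ^ m) ^ t)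
    (hk : k ≤ Fintype.card F - (p ^ m) ^ (t - 1))
    (αs : F)
    (f g : F[X]) (hf : f.degree < (k : WithBot ℕ)) (hg : g.degree < (k : WithBot ℕ))
    (hrep : ∀ α : F, α ≠ αs →
      ∑ i ∈ Finset.range t, (f.eval α * (α - αs)⁻¹) ^ ((p ^ m) ^ i) =
        ∑ i ∈ Finset.range t, (g.eval α * (α - αs)⁻¹) ^ ((p ^ m) ^ i)) :
    f.eval αs = g.eval αs := by
  classical
  haveI : Fact p.Prime := ⟨hp⟩
  set q : ℕ := p ^ m with hqdef
  have hq2 : 2 ≤ q := hp.two_le.trans (Nat.le_self_pow (by omega) p)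
  -- characteristic of F is p
  haveI hcharF : CharP F p := by
    obtain ⟨p', hc⟩ := CharP.exists F
    haveI := hc
    obtain ⟨n, hp', hcard⟩ := FiniteField.card F p'
    have hdvd : p ∣ p' ^ (n : ℕ) := by
      rw [← hcard, hF, ← pow_mul]
      exact dvd_pow_self p (by positivity)
    have : p = p' := by
      have := hp.dvd_of_dvd_pow hdvd
      exact ((Nat.prime_dvd_prime_iff_eq hp hp').mp this)
    rwa [this]
  haveI : ExpChar F p := ExpChar.prime hp
  -- the trace map as an explicit power sum
  set Tr : F → F := fun x => ∑ i ∈ Finset.range t, x ^ q ^ i with hTrdef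
  have hpowq : ∀ (x : F) (i : ℕ), x ^ q ^ i = x ^ p ^ (m * i) := by
    intro x i; rw [pow_mul]
  have hTr_add : ∀ x y : F, Tr (x + y) = Tr x + Tr y := by
    intro x y
    simp only [hTrdef]
    rw [← Finset.sum_add_distrib]
    refine Finset.sum_congr rfl fun i _ => ?_
    rw [hpowq, hpowq, hpowq, add_pow_char_pow]
  have hTr_zero : Tr 0 = 0 := by
    simp only [hTrdef]
    refine Finset.sum_eq_zero fun i _ => ?_
    exact zero_pow (by positivity)
  have hTr_sub : ∀ x y : F, Tr (x - y) = Tr x - Tr y := by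
    intro x y
    simp only [hTrdef]
    rw [← Finset.sum_sub_distrib]
    refine Finset.sum_congr rfl fun i _ => ?_
    rw [hpowq, hpowq, hpowq, sub_pow_char_pow]
  -- x^(q^t) = x
  have hqt : ∀ x : F, x ^ q ^ t = x := by
    intro x
    have := FiniteField.pow_card x
    rwa [hF] at this
  -- Tr lands in the subfield: (Tr x)^q = Tr x
  have hTr_B : ∀ x : F, (Tr x) ^ q = Tr x := by
    intro x
    simp only [hTrdef]
    rw [show (q : ℕ) = p ^ m from rfl, sum_pow_char_pow]
    have h1 : ∀ i : ℕ, (x ^ q ^ i) ^ p ^ m = x ^ q ^ (i + 1) := by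
      intro i
      rw [← pow_mul, ← pow_succ]
    calc ∑ i ∈ Finset.range t, (x ^ q ^ i) ^ p ^ m
        = ∑ i ∈ Finset.range t, x ^ q ^ (i + 1) := by
          exact Finset.sum_congr rfl fun i _ => h1 i
      _ = ∑ i ∈ Finset.range (t + 1), x ^ q ^ i - x ^ q ^ 0 := by
          rw [Finset.sum_range_succ']; ring
      _ = ∑ i ∈ Finset.range t, x ^ q ^ i + x ^ q ^ t - x ^ q ^ 0 := by
          rw [Finset.sum_range_succ]
      _ = ∑ i ∈ Finset.range t, x ^ q ^ i := by
          rw [hqt x]; simp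
  -- Tr is B-linear: Tr (x * c) = Tr x * c when c^q = c
  have hTr_smul : ∀ (x c : F), c ^ q = c → Tr (x * c) = Tr x * c := by
    intro x c hc
    have hci : ∀ i : ℕ, c ^ q ^ i = c := by
      intro i
      induction i with
      | zero => simp
      | succ n ih => rw [pow_succ, pow_mul, ih, hc]
    simp only [hTrdef]
    rw [Finset.sum_mul]
    refine Finset.sum_congr rfl fun i _ => ?_
    rw [mul_pow, hci i]
  -- dispose of the trivial case k = 0
  rcases Nat.eq_zero_or_pos k with hk0 | hk1
  · subst hk0
    have hf0 : f = 0 := by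
      rw [← Polynomial.degree_eq_bot, ← Nat.WithBot.lt_zero_iff]
      simpa using hf
    have hg0 : g = 0 := by
      rw [← Polynomial.degree_eq_bot, ← Nat.WithBot.lt_zero_iff]
      simpa using hg
    rw [hf0, hg0]
  -- the difference polynomial
  set h : F[X] := f - g with hhdef
  have hdeg_h : h.natDegree ≤ k - 1 := by
    rcases eq_or_ne h 0 with h0 | h0
    · rw [h0, Polynomial.natDegree_zero]; omega
    · have : h.degree < (k : WithBot ℕ) :=
        (Polynomial.degree_sub_le f g).trans_lt (max_lt hf hg)
      have := (Polynomial.natDegree_lt_iff_degree_lt h0).mpr this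
      omega
  have hrep0 : ∀ α : F, α ≠ αs → Tr (h.eval α * (α - αs)⁻¹) = 0 := by
    intro α hα
    have : h.eval α * (α - αs)⁻¹
        = f.eval α * (α - αs)⁻¹ - g.eval α * (α - αs)⁻¹ := by
      rw [hhdef, Polynomial.eval_sub, sub_mul]
    rw [this, hTr_sub]
    have := hrep α hα
    simp only [hTrdef]
    rw [this]; ring
  -- key step: Tr (h(αs) * u) = 0 for every u
  have key : ∀ u : F, Tr (h.eval αs * u) = 0 := by
    intro u
    set pu : F[X] := ∑ i ∈ Finset.range t, C (u ^ q ^ i) * (X - C αs) ^ (q ^ i - 1)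
      with hpudef
    have hdeg_pu : pu.natDegree ≤ q ^ (t - 1) - 1 := by
      refine Polynomial.natDegree_sum_le_of_forall_le _ _ fun i hi => ?_
      refine (Polynomial.natDegree_C_mul_le _ _).trans ?_
      rw [Polynomial.natDegree_pow, Polynomial.natDegree_X_sub_C, mul_one]
      have : q ^ i ≤ q ^ (t - 1) :=
        Nat.pow_le_pow_right (by omega) (by have := Finset.mem_range.mp hi; omega)
      omega
    have hQ1 : 1 ≤ q ^ (t - 1) := Nat.one_le_pow _ _ (by omega)
    have hQle : q ^ (t - 1) ≤ q ^ t := Nat.pow_le_pow_right (by omega) (by omega)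
    have hsum : ∑ α : F, (h * pu).eval α = 0 := by
      refine GW_sum_eval_eq_zero _ ?_
      have h1 : (h * pu).natDegree ≤ h.natDegree + pu.natDegree :=
        Polynomial.natDegree_mul_le
      have h2 : k ≤ q ^ t - q ^ (t - 1) := by rw [← hF]; exact hk
      have h3 : q ^ (t - 1) < q ^ t := Nat.pow_lt_pow_right (by omega) (by omega)
      rw [hF]
      omega
    have heval_pu : ∀ α : F,
        pu.eval α = ∑ i ∈ Finset.range t, u ^ q ^ i * (α - αs) ^ (q ^ i - 1) := by
      intro α
      simp [hpudef, Polynomial.eval_finset_sum]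
    have hpu_αs : pu.eval αs = u := by
      rw [heval_pu]
      rw [Finset.sum_eq_single_of_mem 0 (Finset.mem_range.mpr (by omega))]
      · simp
      · intro i hi hi0
        have : 1 ≤ q ^ i - 1 := by
          have : 2 ≤ q ^ i := by
            calc 2 ≤ q := hq2
            _ = q ^ 1 := (pow_one q).symm
            _ ≤ q ^ i := Nat.pow_le_pow_right (by omega) (by omega)
          omega
        rw [sub_self, zero_pow (by omega), mul_zero]
    have hterm : ∀ α : F, α ≠ αs → Tr ((h * pu).eval α) = 0 := by
      intro α hα
      have hd : α - αs ≠ 0 := sub_ne_zero.mpr hα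
      have hdpu : (α - αs) * pu.eval α = Tr (u * (α - αs)) := by
        rw [heval_pu, Finset.mul_sum]
        simp only [hTrdef]
        refine Finset.sum_congr rfl fun i _ => ?_
        have hqi : 1 ≤ q ^ i := Nat.one_le_pow _ _ (by omega)
        rw [mul_pow]
        rw [show (α - αs) ^ q ^ i = (α - αs) ^ (q ^ i - 1) * (α - αs) by
          rw [← pow_succ]; congr 1; omega]
        ring
      have hsplit : (h * pu).eval α
          = (h.eval α * (α - αs)⁻¹) * Tr (u * (α - αs)) := by
        rw [← hdpu, Polynomial.eval_mul]
        field_simp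
      rw [hsplit, hTr_smul _ _ (hTr_B _), hrep0 α hα, zero_mul]
    -- split off the α = αs term
    have hsplit2 : (h * pu).eval αs + ∑ α ∈ Finset.univ.erase αs, (h * pu).eval α = 0 := by
      rw [Finset.add_sum_erase Finset.univ (fun α => Polynomial.eval α (h * pu))
        (Finset.mem_univ αs)]
      exact hsum
    have := congrArg Tr hsplit2
    rw [hTr_add, hTr_zero] at this
    have hTr_sum' : Tr (∑ α ∈ Finset.univ.erase αs, (h * pu).eval α)
        = ∑ α ∈ Finset.univ.erase αs, Tr ((h * pu).eval α) := by
      simp only [hTrdef]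
      rw [Finset.sum_comm]
      refine Finset.sum_congr rfl fun i _ => ?_
      rw [hpowq, sum_pow_char_pow]
      exact Finset.sum_congr rfl fun α _ => (hpowq _ _).symm
    rw [hTr_sum'] at this
    rw [Finset.sum_eq_zero (fun α hα => hterm α (Finset.ne_of_mem_erase hα)),
      add_zero] at this
    rwa [Polynomial.eval_mul, hpu_αs] at this
  -- nondegeneracy of the trace form
  have hx : h.eval αs = 0 := by
    by_contra hx0
    have hall : ∀ y : F, Tr y = 0 := by
      intro y
      have := key ((h.eval αs)⁻¹ * y)
      rwa [← mul_assoc, mul_inv_cancel₀ hx0, one_mul] at this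
    set P : F[X] := ∑ i ∈ Finset.range t, (X : F[X]) ^ q ^ i with hPdef
    have hevalP : ∀ y : F, P.eval y = Tr y := by
      intro y; simp [hPdef, Polynomial.eval_finset_sum, hTrdef]
    have hPdeg : P.natDegree ≤ q ^ (t - 1) := by
      refine Polynomial.natDegree_sum_le_of_forall_le _ _ fun i hi => ?_
      rw [Polynomial.natDegree_X_pow]
      exact Nat.pow_le_pow_right (by omega) (by have := Finset.mem_range.mp hi; omega)
    have hP0 : P = 0 := by
      refine Polynomial.eq_zero_of_natDegree_lt_card_of_eval_eq_zero P
        Function.injective_id (fun y => by rw [id_def, hevalP]; exact hall y) ?_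
      rw [hF]
      exact lt_of_le_of_lt hPdeg (Nat.pow_lt_pow_right (by omega) (by omega))
    have hcoeff : P.coeff 1 = 1 := by
      rw [hPdef, Polynomial.finset_sum_coeff]
      rw [Finset.sum_eq_single_of_mem 0 (Finset.mem_range.mpr (by omega))]
      · simp
      · intro i hi hi0
        rw [Polynomial.coeff_X_pow, if_neg]
        have : 2 ≤ q ^ i := by
          calc 2 ≤ q := hq2
          _ = q ^ 1 := (pow_one q).symm
          _ ≤ q ^ i := Nat.pow_le_pow_right (by omega) (by omega)
        omega
    rw [hP0] at hcoeff
    simp at hcoeff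
  have : f.eval αs - g.eval αs = 0 := by
    rw [← Polynomial.eval_sub]; exact hx
  exact sub_eq_zero.mp this
end

section
/- Let B = GF(q) with q = p^m, F = GF(q^t), and Tr the trace from F to B, and suppose t is divisible by p = char(F). Let α*, ᾱ ∈ F be distinct, let v_1, …, v_{t-1} be a basis over B of the subspace K_{α*,ᾱ} = {z ∈ F : Tr(z(ᾱ-α*)) = 0}, and set q_i(X) = p_{v_i,ᾱ}(X) for i = 1,…,t-1. Then for every u_t ∈ F, the element p_{u_t,α*}(ᾱ) lies in the B-linear span of {q_1(ᾱ), …, q_{t-1}(ᾱ)}. -/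
open Polynomial

/-- If `p = char F` divides `t`, and `v_1, …, v_{t-1}` is a `B`-basis of
`K_{α*,ᾱ}` with `q_i = p_{v_i, ᾱ}`, then for every `u_t ∈ F` the element
`p_{u_t,α*}(ᾱ)` lies in the `B`-span of `{q_1(ᾱ), …, q_{t-1}(ᾱ)}`. -/
theorem missing_trace_dependence (p m t : ℕ) (hp : p.Prime)
    (hm : 1 ≤ m) (ht : 1 ≤ t) (hpt : p ∣ t)
    (B F : Type*) [Field B] [Field F] [Algebra B F] [Fintype B] [Fintype F]
    (hB : Fintype.card B = p ^ m) (hF : Fintype.card F = (p ^ m) ^ t)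
    (αs αb : F) (hne : αs ≠ αb)
    (v : Fin (t - 1) → F)
    (hv_li : LinearIndependent B v)
    (hv_span : (Submodule.span B (Set.range v) : Set F) =
      {z : F | ∑ i ∈ Finset.range t, (z * (αb - αs)) ^ ((p ^ m) ^ i) = 0})
    (Q : Fin (t - 1) → F[X])
    (hQ : ∀ j, (X - C αb) * Q j =
      ∑ i ∈ Finset.range t, (C (v j) * (X - C αb)) ^ ((p ^ m) ^ i))
    (ut : F) (Pt : F[X])
    (hPt : (X - C αs) * Pt =
      ∑ i ∈ Finset.range t, (C ut * (X - C αs)) ^ ((p ^ m) ^ i)) :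
    Pt.eval αb ∈ Submodule.span B (Set.range fun j => (Q j).eval αb) := by
  haveI : Fact p.Prime := ⟨hp⟩
  set q : ℕ := p ^ m with hq
  have hq2 : 2 ≤ q := hp.two_le.trans (Nat.le_self_pow (by omega) p)
  -- characteristic of F is p
  have hpd : p ∣ Fintype.card F := by
    rw [hF, hq, ← pow_mul]
    exact dvd_pow_self p (by positivity)
  have hrc : ringChar F = p := by
    have h1 : p ∣ ringChar F := (prime_dvd_char_iff_dvd_card p).2 hpd
    have h2 : (ringChar F).Prime := CharP.char_is_prime F (ringChar F)
    exact ((Nat.prime_dvd_prime_iff_eq hp h2).1 h1).symm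
  haveI hcp : CharP F p := hrc ▸ ringChar.charP F
  haveI : ExpChar F p := ExpChar.prime hp
  -- Step 1 : Q j evaluated at αb equals v j
  have hQv : ∀ j, (Q j).eval αb = v j := by
    intro j
    have hx : (X - C αb : F[X]) ≠ 0 := X_sub_C_ne_zero αb
    have key : (X - C αb) * Q j =
        (X - C αb) * ∑ i ∈ Finset.range t, C (v j) ^ q ^ i * (X - C αb) ^ (q ^ i - 1) := by
      rw [hQ j, Finset.mul_sum]
      refine Finset.sum_congr rfl fun i _ => ?_
      have h1 : 1 ≤ q ^ i := Nat.one_le_pow _ _ (by omega)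
      rw [mul_pow, mul_left_comm, ← pow_succ', Nat.sub_add_cancel h1]
    have hQeq := mul_left_cancel₀ hx key
    rw [hQeq, eval_finset_sum]
    rw [Finset.sum_eq_single 0]
    · simp
    · intro i _ hi
      have h1 : 1 ≤ q ^ i - 1 := by
        have : q ≤ q ^ i := Nat.le_self_pow (by omega) q
        omega
      simp [zero_pow (by omega : q ^ i - 1 ≠ 0)]
    · intro h
      exact absurd (Finset.mem_range.2 (by omega)) h
  -- Step 2 : the spans coincide
  have hrange : (Set.range fun j => (Q j).eval αb) = Set.range v := by
    ext x; constructor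
    · rintro ⟨j, rfl⟩; exact ⟨j, (hQv j).symm⟩
    · rintro ⟨j, rfl⟩; exact ⟨j, hQv j⟩
  rw [hrange]
  -- Step 3 : evaluate hPt at αb
  set c : F := ∑ i ∈ Finset.range t, (ut * (αb - αs)) ^ q ^ i with hc
  have heval : (αb - αs) * Pt.eval αb = c := by
    have := congrArg (eval αb) hPt
    simpa [eval_finset_sum] using this
  -- Step 4 : c ^ q = c
  have hyt : ∀ y : F, y ^ q ^ t = y := by
    intro y
    have := FiniteField.pow_card y
    rwa [hF] at this
  have hcq : c ^ q = c := by
    rw [hc, hq, sum_pow_char_pow, ← hq]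
    have hterm : ∀ i, ((ut * (αb - αs)) ^ q ^ i) ^ q = (ut * (αb - αs)) ^ q ^ (i + 1) := by
      intro i; rw [← pow_mul, ← pow_succ]
    simp only [hterm]
    -- reindex the shifted sum
    have h1 : ∑ i ∈ Finset.range (t + 1), (ut * (αb - αs)) ^ q ^ i =
        (∑ i ∈ Finset.range t, (ut * (αb - αs)) ^ q ^ (i + 1)) + (ut * (αb - αs)) ^ q ^ 0 :=
      Finset.sum_range_succ' _ t
    have h2 : ∑ i ∈ Finset.range (t + 1), (ut * (αb - αs)) ^ q ^ i =
        (∑ i ∈ Finset.range t, (ut * (αb - αs)) ^ q ^ i) + (ut * (αb - αs)) ^ q ^ t :=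
      Finset.sum_range_succ _ t
    have h3 : (ut * (αb - αs)) ^ q ^ t = (ut * (αb - αs)) ^ q ^ 0 := by
      rw [hyt, pow_zero, pow_one]
    rw [h3] at h2
    have := h1.symm.trans h2
    exact add_right_cancel this
  have hcqi : ∀ i, c ^ q ^ i = c := by
    intro i
    induction i with
    | zero => simp
    | succ n ih => rw [pow_succ, pow_mul, ih, hcq]
  -- Step 5 : Tr(Pt(αb)(αb-αs)) = t • c = 0
  have hmem : ∑ i ∈ Finset.range t, (Pt.eval αb * (αb - αs)) ^ q ^ i = 0 := by
    have hcomm : Pt.eval αb * (αb - αs) = c := by rw [mul_comm]; exact heval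
    rw [hcomm]
    calc ∑ i ∈ Finset.range t, c ^ q ^ i = ∑ _i ∈ Finset.range t, c :=
          Finset.sum_congr rfl fun i _ => hcqi i
      _ = (t : F) * c := by rw [Finset.sum_const, Finset.card_range, nsmul_eq_mul]
      _ = 0 := by rw [(CharP.cast_eq_zero_iff F p t).2 hpt, zero_mul]
  have : Pt.eval αb ∈ (Submodule.span B (Set.range v) : Set F) := by
    rw [hv_span]; exact hmem
  exact this
end

section
/- Let B = GF(q) with q = p^m, F = GF(q^t), and Tr the trace from F to B, and suppose t is divisible by p = char(F). Let α*, ᾱ ∈ F be distinct, let v_1, …, v_{t-1} be a basis over B of K_{α*,ᾱ} = {z ∈ F : Tr(z(ᾱ-α*)) = 0}, set q_i(X) = p_{v_i,ᾱ}(X), and fix u_t ∈ F with p_t(X) = p_{u_t,α*}(X). Then there exist coefficients c_1, …, c_{t-1} ∈ B, depending only on α*, ᾱ, u_t and v_1,…,v_{t-1} (and not on w), such that for every w ∈ F: Tr(p_t(ᾱ)·w) = Σ_{i=1}^{t-1} c_i · Tr(q_i(ᾱ)·w). -/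
open Polynomial

/-- If `p = char F` divides `t`, then there are coefficients `c_i ∈ B`, independent
of `w`, with `Tr(p_t(ᾱ)·w) = ∑_i c_i · Tr(q_i(ᾱ)·w)` for every `w ∈ F`. -/
theorem missing_trace_combination (p m t : ℕ) (hp : p.Prime)
    (hm : 1 ≤ m) (ht : 1 ≤ t) (hpt : p ∣ t)
    (B F : Type*) [Field B] [Field F] [Algebra B F] [Fintype B] [Fintype F]
    (hB : Fintype.card B = p ^ m) (hF : Fintype.card F = (p ^ m) ^ t)
    (αs αb : F) (hne : αs ≠ αb)
    (v : Fin (t - 1) → F)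
    (hv_li : LinearIndependent B v)
    (hv_span : (Submodule.span B (Set.range v) : Set F) =
      {z : F | ∑ i ∈ Finset.range t, (z * (αb - αs)) ^ ((p ^ m) ^ i) = 0})
    (Q : Fin (t - 1) → F[X])
    (hQ : ∀ j, (X - C αb) * Q j =
      ∑ i ∈ Finset.range t, (C (v j) * (X - C αb)) ^ ((p ^ m) ^ i))
    (ut : F) (Pt : F[X])
    (hPt : (X - C αs) * Pt =
      ∑ i ∈ Finset.range t, (C ut * (X - C αs)) ^ ((p ^ m) ^ i)) :
    ∃ c : Fin (t - 1) → B, ∀ w : F,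
      ∑ i ∈ Finset.range t, (Pt.eval αb * w) ^ ((p ^ m) ^ i) =
        ∑ j : Fin (t - 1), algebraMap B F (c j) *
          ∑ i ∈ Finset.range t, ((Q j).eval αb * w) ^ ((p ^ m) ^ i) := by
  haveI : Fact p.Prime := ⟨hp⟩
  -- characteristic of F is p
  haveI hcharF : CharP F p := by
    have h0 : ((p ^ (m * t) : ℕ) : F) = 0 := by
      rw [pow_mul, ← hF]; exact FiniteField.cast_card_eq_zero F
    have hr : (ringChar F) ∣ p ^ (m * t) := (ringChar.spec F _).mp h0
    have hrp : (ringChar F).Prime := (CharP.char_is_prime F (ringChar F))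
    have : ringChar F = p :=
      (Nat.prime_dvd_prime_iff_eq hrp hp).mp (hrp.dvd_of_dvd_pow hr)
    exact this ▸ ringChar.charP F
  have hpowF : ∀ x : F, x ^ ((p ^ m) ^ t) = x := fun x => by
    rw [← hF]; exact FiniteField.pow_card x
  have hpowB : ∀ (b : B) (i : ℕ), (algebraMap B F b) ^ ((p ^ m) ^ i) =
      algebraMap B F b := fun b i => by
    rw [← map_pow]; congr 1; rw [← hB]; exact FiniteField.pow_card_pow i b
  -- frobenius additivity for sums with exponent (p^m)^i
  have hfrob : ∀ (i : ℕ) {ι : Type} (s : Finset ι) (f : ι → F),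
      (∑ j ∈ s, f j) ^ ((p ^ m) ^ i) = ∑ j ∈ s, (f j) ^ ((p ^ m) ^ i) := by
    intro i ι s f
    rw [← pow_mul, sum_pow_char_pow]
  -- evaluation of Q j at αb is v j
  have hQeval : ∀ j, (Q j).eval αb = v j := by
    intro j
    have h := congrArg (fun P : F[X] => (Polynomial.derivative P).eval αb) (hQ j)
    simp only [derivative_mul, derivative_sub, derivative_X, derivative_C, sub_zero,
      derivative_sum, derivative_pow, eval_add, eval_mul, eval_sub, eval_X, eval_C,
      eval_one, eval_finset_sum, eval_pow, eval_natCast, sub_self, mul_zero, one_mul,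
      zero_mul, add_zero] at h
    rw [h]
    rw [Finset.sum_eq_single 0]
    · simp
    · intro i hi hi0
      have h1 : 1 ≤ (p ^ m) ^ i - 1 := by
        have : 2 ≤ (p ^ m) ^ i := by
          calc 2 ≤ p ^ m := by
                have := hp.two_le
                calc 2 ≤ p := hp.two_le
                _ ≤ p ^ m := Nat.le_self_pow (by omega) p
          _ ≤ (p ^ m) ^ i := Nat.le_self_pow hi0 _
        omega
      rw [zero_pow (by omega)]
      ring
    · intro h0; exact absurd (Finset.mem_range.mpr (by omega)) h0
  -- the trace value s
  set s : F := ∑ i ∈ Finset.range t, (ut * (αb - αs)) ^ ((p ^ m) ^ i) with hs_def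
  have hPtval : (αb - αs) * Pt.eval αb = s := by
    have h := congrArg (fun P : F[X] => P.eval αb) hPt
    simp only [eval_mul, eval_sub, eval_X, eval_C, eval_finset_sum, eval_pow] at h
    rw [hs_def]
    exact h
  -- s is fixed by Frobenius
  have hshift : ∀ f : ℕ → F, f t = f 0 →
      ∑ i ∈ Finset.range t, f (i + 1) = ∑ i ∈ Finset.range t, f i := by
    intro f hf
    have h1 := Finset.sum_range_succ f t
    have h2 := Finset.sum_range_succ' f t
    rw [h1, hf] at h2
    exact (add_right_cancel h2).symm
  have hsfix : s ^ (p ^ m) = s := by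
    rw [hs_def, sum_pow_char_pow]
    have step : ∀ i : ℕ, ((ut * (αb - αs)) ^ ((p ^ m) ^ i)) ^ p ^ m =
        (ut * (αb - αs)) ^ ((p ^ m) ^ (i + 1)) := fun i => by
      rw [← pow_mul, ← pow_succ]
    rw [Finset.sum_congr rfl fun i _ => step i]
    exact hshift (fun i => (ut * (αb - αs)) ^ ((p ^ m) ^ i)) (by simp [hpowF])
  have hsfixi : ∀ i, s ^ ((p ^ m) ^ i) = s := by
    intro i
    induction i with
    | zero => simp
    | succ n ih => rw [pow_succ, pow_mul, ih, hsfix]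
  -- trace of s is zero
  have htr0 : ∑ i ∈ Finset.range t, s ^ ((p ^ m) ^ i) = 0 := by
    simp_rw [hsfixi]
    rw [Finset.sum_const, Finset.card_range, nsmul_eq_mul,
      (CharP.cast_eq_zero_iff F p t).mpr hpt, zero_mul]
  -- Pt.eval αb lies in the span of v
  have hmem : Pt.eval αb ∈ Submodule.span B (Set.range v) := by
    have : Pt.eval αb ∈ (Submodule.span B (Set.range v) : Set F) := by
      rw [hv_span]
      show ∑ i ∈ Finset.range t, (Pt.eval αb * (αb - αs)) ^ ((p ^ m) ^ i) = 0
      rw [mul_comm, hPtval]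
      exact htr0
    exact this
  obtain ⟨c, hc⟩ := (Submodule.mem_span_range_iff_exists_fun B).mp hmem
  refine ⟨c, fun w => ?_⟩
  calc ∑ i ∈ Finset.range t, (Pt.eval αb * w) ^ ((p ^ m) ^ i)
      = ∑ i ∈ Finset.range t, ∑ j : Fin (t - 1),
          (algebraMap B F (c j) * (v j * w)) ^ ((p ^ m) ^ i) := by
        refine Finset.sum_congr rfl fun i _ => ?_
        rw [← hc, Finset.sum_mul, hfrob]
        refine Finset.sum_congr rfl fun j _ => ?_
        congr 1
        rw [Algebra.smul_def, mul_assoc]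
    _ = ∑ j : Fin (t - 1), algebraMap B F (c j) *
          ∑ i ∈ Finset.range t, ((Q j).eval αb * w) ^ ((p ^ m) ^ i) := by
        rw [Finset.sum_comm]
        refine Finset.sum_congr rfl fun j _ => ?_
        rw [Finset.mul_sum]
        refine Finset.sum_congr rfl fun i _ => ?_
        rw [mul_pow, hpowB, hQeval]
end

section
/- Let B = GF(q) with q = p^m, F = GF(q^t), and Tr the trace from F to B. Let α*, ᾱ ∈ F be distinct. Let u_1, …, u_{t-1} be a basis over B of K_{α*,ᾱ} = {z ∈ F : Tr(z(ᾱ-α*)) = 0}, extended by u_t ∈ F to a basis u_1,…,u_t of F over B, and let v_1, …, v_{t-1} be another basis of K_{α*,ᾱ} over B. Set p_i(X) = p_{u_i,α*}(X). Then: (i) p_{u_t,α*}(ᾱ) = p_t(ᾱ) ≠ 0, so τ := v_1 / p_t(ᾱ) is a well-defined nonzero element of F; and the polynomials p*_i(X) := τ·p_i(X), i = 1,…,t, satisfy (P1) p*_i(ᾱ) = 0 for all i = 1,…,t-1; (P2) p*_t(ᾱ) = v_1 ≠ 0; and (P3) {p*_1(α*), …, p*_t(α*)} is a basis of F over B. 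-/
open Polynomial

/-- Properties of the modified check polynomials `p*_i = τ·p_i`, where
`u_1,…,u_{t-1}` is a `B`-basis of `K_{α*,ᾱ}` extended by `u_t` to a `B`-basis of
`F`, `p_i = p_{u_i,α*}`, `v_1,…,v_{t-1}` is another `B`-basis of `K_{α*,ᾱ}`, and
`τ = v_1 / p_t(ᾱ)`:
(i) `p_t(ᾱ) ≠ 0` (so `τ` is well defined and nonzero);
(P1) `p*_i(ᾱ) = 0` for `i = 1,…,t-1`;
(P2) `p*_t(ᾱ) = v_1 ≠ 0`;
(P3) `{p*_1(α*),…,p*_t(α*)}` is a `B`-basis of `F`. -/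
theorem modified_check_polynomials (p m t : ℕ) (hp : p.Prime)
    (hm : 1 ≤ m) (ht : 2 ≤ t)
    (B F : Type*) [Field B] [Field F] [Algebra B F] [Fintype B] [Fintype F]
    (hB : Fintype.card B = p ^ m) (hF : Fintype.card F = (p ^ m) ^ t)
    (αs αb : F) (hne : αs ≠ αb)
    (u : Fin t → F)
    (hu_li : LinearIndependent B u)
    (hu_span : Submodule.span B (Set.range u) = ⊤)
    (hu_K : (Submodule.span B
        (Set.range fun j : Fin (t - 1) => u (Fin.castLE (Nat.sub_le t 1) j)) : Set F) =
      {z : F | ∑ i ∈ Finset.range t, (z * (αb - αs)) ^ ((p ^ m) ^ i) = 0})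
    (v : Fin (t - 1) → F)
    (hv_li : LinearIndependent B v)
    (hv_span : (Submodule.span B (Set.range v) : Set F) =
      {z : F | ∑ i ∈ Finset.range t, (z * (αb - αs)) ^ ((p ^ m) ^ i) = 0})
    (P : Fin t → F[X])
    (hP : ∀ j, (X - C αs) * P j =
      ∑ i ∈ Finset.range t, (C (u j) * (X - C αs)) ^ ((p ^ m) ^ i)) :
    (P ⟨t - 1, by omega⟩).eval αb ≠ 0 ∧
    v ⟨0, by omega⟩ / (P ⟨t - 1, by omega⟩).eval αb ≠ 0 ∧
    (∀ j : Fin t, (j : ℕ) < t - 1 →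
      (v ⟨0, by omega⟩ / (P ⟨t - 1, by omega⟩).eval αb) * (P j).eval αb = 0) ∧
    (v ⟨0, by omega⟩ / (P ⟨t - 1, by omega⟩).eval αb) * (P ⟨t - 1, by omega⟩).eval αb =
      v ⟨0, by omega⟩ ∧
    v ⟨0, by omega⟩ ≠ 0 ∧
    LinearIndependent B
      (fun j : Fin t =>
        (v ⟨0, by omega⟩ / (P ⟨t - 1, by omega⟩).eval αb) * (P j).eval αs) ∧
    Submodule.span B
      (Set.range fun j : Fin t =>
        (v ⟨0, by omega⟩ / (P ⟨t - 1, by omega⟩).eval αb) * (P j).eval αs) = ⊤ := by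
  have hsub : αb - αs ≠ 0 := sub_ne_zero.mpr (Ne.symm hne)
  have hq2 : 2 ≤ p ^ m := le_trans hp.two_le (Nat.le_self_pow (by omega) p)
  -- evaluation at αb
  have heval : ∀ j, (αb - αs) * (P j).eval αb =
      ∑ i ∈ Finset.range t, (u j * (αb - αs)) ^ ((p ^ m) ^ i) := by
    intro j
    have := congrArg (eval αb) (hP j)
    simpa [eval_finset_sum] using this
  -- evaluation at αs equals u j
  have hPs : ∀ j, (P j).eval αs = u j := by
    intro j
    have hX : (X - C αs : F[X]) ≠ 0 := X_sub_C_ne_zero αs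
    have hrange : (Finset.range t).erase 0 = Finset.Ioo 0 t := by
      ext i; simp
    have key : (X - C αs) * P j = (X - C αs) *
        (C (u j) + ∑ i ∈ Finset.Ioo 0 t,
          C (u j) ^ ((p ^ m) ^ i) * (X - C αs) ^ ((p ^ m) ^ i - 1)) := by
      rw [hP j, ← Finset.add_sum_erase _ _ (Finset.mem_range.mpr (by omega : 0 < t)),
        hrange, mul_add]
      congr 1
      · simp [mul_comm]
      · rw [Finset.mul_sum]
        refine Finset.sum_congr rfl fun i hi => ?_
        have hi1 : 1 ≤ (p ^ m) ^ i := Nat.one_le_pow _ _ (by omega)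
        obtain ⟨n, hn⟩ : ∃ n, (p ^ m) ^ i = n + 1 := ⟨(p ^ m) ^ i - 1, by omega⟩
        rw [hn, Nat.add_sub_cancel, mul_pow, pow_succ]
        ring
    have hc := mul_left_cancel₀ hX key
    rw [hc, eval_add, eval_C, eval_finset_sum]
    rw [Finset.sum_eq_zero, add_zero]
    intro i hi
    rw [Finset.mem_Ioo] at hi
    have h2 : 2 ≤ (p ^ m) ^ i := le_trans hq2 (Nat.le_self_pow (by omega) _)
    simp [sub_self, zero_pow (by omega : (p ^ m) ^ i - 1 ≠ 0)]
  -- P1 for j < t-1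
  have hP1 : ∀ j : Fin t, (j : ℕ) < t - 1 → (P j).eval αb = 0 := by
    intro j hj
    have hmem : u j ∈ {z : F | ∑ i ∈ Finset.range t, (z * (αb - αs)) ^ ((p ^ m) ^ i) = 0} := by
      rw [← hu_K]
      have : u j = u (Fin.castLE (Nat.sub_le t 1) ⟨(j : ℕ), hj⟩) := by
        congr 1
      rw [this]
      exact Submodule.subset_span ⟨⟨(j : ℕ), hj⟩, rfl⟩
    have h0 : (αb - αs) * (P j).eval αb = 0 := by rw [heval j]; exact hmem
    exact (mul_eq_zero.mp h0).resolve_left hsub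
  -- (i): P_t(αb) ≠ 0
  have hPt : (P ⟨t - 1, by omega⟩).eval αb ≠ 0 := by
    intro h0
    have hz : ∑ i ∈ Finset.range t,
        (u ⟨t - 1, by omega⟩ * (αb - αs)) ^ ((p ^ m) ^ i) = 0 := by
      rw [← heval, h0, mul_zero]
    have hmem : u ⟨t - 1, by omega⟩ ∈ Submodule.span B
        (Set.range fun j : Fin (t - 1) => u (Fin.castLE (Nat.sub_le t 1) j)) := by
      rw [← SetLike.mem_coe, hu_K]; exact hz
    have himg : Set.range (fun j : Fin (t - 1) => u (Fin.castLE (Nat.sub_le t 1) j)) =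
        u '' {i : Fin t | (i : ℕ) < t - 1} := by
      ext x
      constructor
      · rintro ⟨j, rfl⟩; exact ⟨Fin.castLE (Nat.sub_le t 1) j, j.isLt, rfl⟩
      · rintro ⟨i, hi, rfl⟩
        refine ⟨⟨(i : ℕ), hi⟩, ?_⟩
        congr 1
    rw [himg] at hmem
    exact hu_li.notMem_span_image (by simp) hmem
  have hv0 : v ⟨0, by omega⟩ ≠ 0 := hv_li.ne_zero _
  have hτ : v ⟨0, by omega⟩ / (P ⟨t - 1, by omega⟩).eval αb ≠ 0 := div_ne_zero hv0 hPt
  set τ := v ⟨0, by omega⟩ / (P ⟨t - 1, by omega⟩).eval αb with hτdef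
  refine ⟨hPt, hτ, fun j hj => by rw [hP1 j hj, mul_zero],
    div_mul_cancel₀ _ hPt, hv0, ?_, ?_⟩
  · have : (fun j : Fin t => τ * (P j).eval αs) = (LinearMap.mulLeft B τ) ∘ u := by
      funext j; simp [hPs j, LinearMap.mulLeft_apply]
    rw [this]
    exact hu_li.map' (LinearMap.mulLeft B τ)
      (LinearMap.ker_eq_bot.mpr (mul_right_injective₀ hτ))
  · have h1 : (Set.range fun j : Fin t => τ * (P j).eval αs) =
        (LinearMap.mulLeft B τ) '' Set.range u := by
      rw [← Set.range_comp]
      exact congrArg Set.range (funext fun j => by simp [hPs j, LinearMap.mulLeft_apply])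
    rw [h1, ← Submodule.map_span, hu_span, Submodule.map_top,
      LinearMap.range_eq_top]
    intro x
    exact ⟨τ⁻¹ * x, by rw [LinearMap.mulLeft_apply]; exact mul_inv_cancel_left₀ hτ x⟩
end

section
/- (Correctness of the depth-two collaborative two-erasure repair scheme, full-length case.) Let B = GF(q) with q = p^m, F = GF(q^t), and Tr the trace from F to B, and let k ≤ |F| - q^{t-1} (no divisibility condition on t is required). Let α*, ᾱ ∈ F be distinct. Then there exists a nonzero element τ ∈ F, depending only on α* and ᾱ (and a choice of bases of K_{α*,ᾱ} over B), such that: if f, g ∈ F[X] both have degree less than k, and for every α ∈ F \ {α*, ᾱ} both Tr(τ·f(α)·(α-α*)^{-1}) = Tr(τ·g(α)·(α-α*)^{-1}) and Tr(f(α)·(α-ᾱ)^{-1}) = Tr(g(α)·(α-ᾱ)^{-1}) hold, then f(α*) = g(α*) and f(ᾱ) = g(ᾱ). -/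
open Polynomial

private lemma sum_eval_eq_zero {F : Type*} [Field F] [Fintype F] (P : F[X])
    (hP : P.natDegree < Fintype.card F - 1) : ∑ x : F, P.eval x = 0 := by
  have h1 : ∀ x : F, P.eval x = ∑ i ∈ Finset.range (Fintype.card F - 1), P.coeff i * x ^ i :=
    fun x => eval_eq_sum_range' hP x
  rw [Finset.sum_congr rfl fun x _ => h1 x, Finset.sum_comm]
  refine Finset.sum_eq_zero fun i hi => ?_
  rw [← Finset.mul_sum, FiniteField.sum_pow_lt_card_sub_one F i (Finset.mem_range.1 hi), mul_zero]

/-- Correctness of the depth-two collaborative two-erasure repair scheme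
(full-length case): for `k ≤ |F| - q^{t-1}` and any two distinct evaluation points
`α*, ᾱ ∈ F` there is a nonzero multiplier `τ ∈ F`, depending only on `α*` and `ᾱ`,
such that the two erased symbols `f(α*)`, `f(ᾱ)` of a codeword of `RS(F,k)` are
jointly determined by the repair traces `Tr(τ·f(α)·(α-α*)⁻¹)` and
`Tr(f(α)·(α-ᾱ)⁻¹)`, `α ∈ F \ {α*, ᾱ}`. No divisibility condition on `t` is needed. -/
theorem depth_two_two_erasure_repair (p m t k : ℕ) (hp : p.Prime)
    (hm : 1 ≤ m) (ht : 2 ≤ t)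
    (F : Type*) [Field F] [Fintype F] (hF : Fintype.card F = (p ^ m) ^ t)
    (hk : k ≤ Fintype.card F - (p ^ m) ^ (t - 1))
    (αs αb : F) (hne : αs ≠ αb) :
    ∃ τ : F, τ ≠ 0 ∧
      ∀ f g : F[X], f.degree < (k : WithBot ℕ) → g.degree < (k : WithBot ℕ) →
        (∀ α : F, α ≠ αs → α ≠ αb →
          ∑ i ∈ Finset.range t, (τ * f.eval α * (α - αs)⁻¹) ^ ((p ^ m) ^ i) =
            ∑ i ∈ Finset.range t, (τ * g.eval α * (α - αs)⁻¹) ^ ((p ^ m) ^ i)) →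
        (∀ α : F, α ≠ αs → α ≠ αb →
          ∑ i ∈ Finset.range t, (f.eval α * (α - αb)⁻¹) ^ ((p ^ m) ^ i) =
            ∑ i ∈ Finset.range t, (g.eval α * (α - αb)⁻¹) ^ ((p ^ m) ^ i)) →
        f.eval αs = g.eval αs ∧ f.eval αb = g.eval αb := by
  classical
  set q := p ^ m with hqdef
  have hq2 : 2 ≤ q := by
    calc 2 ≤ p := hp.two_le
    _ = p ^ 1 := (pow_one p).symm
    _ ≤ p ^ m := Nat.pow_le_pow_right hp.pos hm
  -- characteristic
  haveI hfp : Fact p.Prime := ⟨hp⟩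
  haveI hpF : CharP F p := by
    obtain ⟨n, hr, hcard⟩ := FiniteField.card F (ringChar F)
    have hdvd : p ∣ ringChar F ^ (n : ℕ) := by
      rw [← hcard, hF, ← pow_mul]
      exact dvd_pow_self p (by positivity)
    have hpr : p = ringChar F :=
      (Nat.prime_dvd_prime_iff_eq hp hr).1 (hp.dvd_of_dvd_pow hdvd)
    rw [hpr]; exact ringChar.charP F
  -- the trace map
  set T : F → F := fun x => ∑ i ∈ Finset.range t, x ^ q ^ i with hTdef
  have hqi : ∀ i : ℕ, q ^ i = p ^ (m * i) := fun i => by rw [hqdef, pow_mul]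
  have hpow_sum : ∀ (i : ℕ) (s : Finset F) (v : F → F),
      (∑ α ∈ s, v α) ^ q ^ i = ∑ α ∈ s, v α ^ q ^ i := by
    intro i s v
    rw [hqi i]
    simpa only [iterateFrobenius_def] using map_sum (iterateFrobenius F p (m * i)) v s
  have hpow_sumN : ∀ (i : ℕ) (s : Finset ℕ) (v : ℕ → F),
      (∑ α ∈ s, v α) ^ q ^ i = ∑ α ∈ s, v α ^ q ^ i := by
    intro i s v
    rw [hqi i]
    simpa only [iterateFrobenius_def] using map_sum (iterateFrobenius F p (m * i)) v s
  have hpow_add : ∀ (i : ℕ) (x y : F), (x + y) ^ q ^ i = x ^ q ^ i + y ^ q ^ i := by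
    intro i x y; rw [hqi i]
    simpa only [iterateFrobenius_def] using map_add (iterateFrobenius F p (m * i)) x y
  have hTadd : ∀ x y : F, T (x + y) = T x + T y := by
    intro x y
    simp only [hTdef]
    rw [← Finset.sum_add_distrib]
    exact Finset.sum_congr rfl fun i _ => hpow_add i x y
  have hTsub : ∀ x y : F, T (x - y) = T x - T y := by
    intro x y
    have := hTadd (x - y) y
    rw [sub_add_cancel] at this
    rw [this]; ring
  have hT0 : T 0 = 0 := by
    simp only [hTdef]
    exact Finset.sum_eq_zero fun i _ => zero_pow (by positivity)
  have hTsum : ∀ (s : Finset F) (v : F → F), T (∑ α ∈ s, v α) = ∑ α ∈ s, T (v α) := by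
    intro s v
    simp only [hTdef]
    rw [Finset.sum_comm]
    exact Finset.sum_congr rfl fun i _ => hpow_sum i s v
  have hcardF : Fintype.card F = q ^ t := hF
  have hTfix : ∀ x : F, (T x) ^ q = T x := by
    intro x
    have hx : x ^ q ^ t = x := by
      have := FiniteField.pow_card x
      rwa [hcardF] at this
    have h1 : (T x) ^ q = ∑ i ∈ Finset.range t, x ^ q ^ (i + 1) := by
      simp only [hTdef]
      rw [show ((∑ i ∈ Finset.range t, x ^ q ^ i) ^ q
          = ∑ i ∈ Finset.range t, (x ^ q ^ i) ^ q) by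
        simpa only [pow_one] using hpow_sumN 1 (Finset.range t) (fun i => x ^ q ^ i)]
      exact Finset.sum_congr rfl fun i _ => by rw [← pow_mul, ← pow_succ]
    rw [h1]
    have h2 := Finset.sum_range_succ' (fun i => x ^ q ^ i) t
    have h3 := Finset.sum_range_succ (fun i => x ^ q ^ i) t
    rw [h3] at h2
    simp only [pow_zero, pow_one, hx] at h2
    -- h2 : (∑ i ∈ range t, x ^ q ^ i) + x = (∑ i ∈ range t, x ^ q ^ (i+1)) + x
    have := h2.symm
    simp only [hTdef]
    linear_combination this
  have hsfix : ∀ s : F, s ^ q = s → ∀ i : ℕ, s ^ q ^ i = s := by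
    intro s hs i
    induction i with
    | zero => simp
    | succ n ih => rw [pow_succ, pow_mul, ih, hs]
  have hTsmul : ∀ (s x : F), s ^ q = s → T (s * x) = s * T x := by
    intro s x hs
    simp only [hTdef, Finset.mul_sum]
    exact Finset.sum_congr rfl fun i _ => by rw [mul_pow, hsfix s hs i]
  -- existence of y with T y ≠ 0
  have hq1t : q ^ (t - 1) < q ^ t :=
    Nat.pow_lt_pow_right (show 1 < q by omega) (show t - 1 < t by omega)
  have hTy : ∃ y : F, T y ≠ 0 := by
    set Tp : F[X] := ∑ i ∈ Finset.range t, X ^ q ^ i with hTp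
    have hco : Tp.coeff (q ^ (t - 1)) = 1 := by
      rw [hTp, finset_sum_coeff, Finset.sum_eq_single (t - 1)]
      · rw [coeff_X_pow, if_pos rfl]
      · intro i _ hnei
        rw [coeff_X_pow, if_neg fun h => hnei (Nat.pow_right_injective hq2 h.symm)]
      · intro hmem; exact absurd (Finset.mem_range.2 (by omega)) hmem
    have hne0 : Tp ≠ 0 := fun h => by simp [h] at hco
    have hdeg : Tp.natDegree < Fintype.card F := by
      have : Tp.natDegree ≤ q ^ (t - 1) := by
        refine natDegree_sum_le_of_forall_le _ _ fun i hi => ?_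
        rw [natDegree_X_pow]
        exact Nat.pow_le_pow_right (by omega) (by
          have := Finset.mem_range.1 hi; omega)
      rw [hcardF]; omega
    obtain ⟨y, hy⟩ := Polynomial.exists_eval_ne_zero_of_natDegree_lt_card Tp hne0
      (by rw [Cardinal.mk_fintype]; exact_mod_cast hdeg)
    refine ⟨y, ?_⟩
    simpa [hTp, eval_finset_sum, hTdef] using hy
  have nondeg : ∀ w : F, (∀ z : F, T (z * w) = 0) → w = 0 := by
    intro w hw
    by_contra h0
    obtain ⟨y, hy⟩ := hTy
    exact hy (by simpa [mul_assoc, inv_mul_cancel₀ h0] using hw (y * w⁻¹))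
  -- existence of τ ≠ 0 with T τ = 0
  obtain ⟨x, -, y, -, hxy, hTxy⟩ :=
    Finset.exists_ne_map_eq_of_card_lt_of_maps_to (s := (Finset.univ : Finset F))
      (t := ((X : F[X]) ^ q - X).roots.toFinset)
      (by
        have h1 : ((X : F[X]) ^ q - X).roots.toFinset.card ≤ ((X : F[X]) ^ q - X).natDegree :=
          (Multiset.toFinset_card_le _).trans (card_roots' _)
        have h2 : ((X : F[X]) ^ q - X).natDegree ≤ q := by
          refine (natDegree_sub_le _ _).trans ?_
          simp [natDegree_X_pow]
          omega
        have h3 : q < Fintype.card F := by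
          rw [hcardF]
          calc q = q ^ 1 := (pow_one q).symm
          _ < q ^ t := Nat.pow_lt_pow_right (show 1 < q by omega) (show 1 < t by omega)
        rw [Finset.card_univ]; omega)
      (f := T)
      (by
        intro a _
        have hne0 : ((X : F[X]) ^ q - X) ≠ 0 := by
          intro h
          have := congrArg (fun P : F[X] => P.coeff 1) h
          simp only [coeff_sub, coeff_X_pow, coeff_X_one, coeff_zero] at this
          rw [if_neg (by omega : ¬(1 : ℕ) = q)] at this
          simp at this
        rw [Finset.mem_coe, Multiset.mem_toFinset, mem_roots hne0]
        simp [IsRoot, hTfix a])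
  refine ⟨x - y, sub_ne_zero.2 hxy, ?_⟩
  set τ := x - y with hτdef
  have hTτ : T τ = 0 := by rw [hτdef, hTsub, hTxy, sub_self]
  have hτ0 : τ ≠ 0 := sub_ne_zero.2 hxy
  -- the key repair identity
  have hkey : ∀ P : F[X], P.degree < (k : WithBot ℕ) → ∀ β z : F,
      z * P.eval β + ∑ α ∈ Finset.univ.erase β,
        P.eval α * T (z * (α - β)) * (α - β)⁻¹ = 0 := by
    intro P hPdeg β z
    have hdegb : ∀ e : ℕ, e ≤ q ^ (t - 1) - 1 →
        (P * (X - C β) ^ e).natDegree < Fintype.card F - 1 := by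
      intro e he
      have hq1t2 : 2 ≤ q ^ (t - 1) := by
        calc 2 ≤ q := hq2
        _ = q ^ 1 := (pow_one q).symm
        _ ≤ q ^ (t - 1) := Nat.pow_le_pow_right (by omega) (by omega)
      have hkq : k + q ^ (t - 1) ≤ Fintype.card F := by
        have : q ^ (t - 1) ≤ Fintype.card F := by rw [hcardF]; omega
        omega
      rcases eq_or_ne P 0 with rfl | hP0
      · simp only [zero_mul, natDegree_zero]
        omega
      · have h1 : P.natDegree < k := (natDegree_lt_iff_degree_lt hP0).2 hPdeg
        have h2 : (P * (X - C β) ^ e).natDegree ≤ P.natDegree + e := by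
          refine (natDegree_mul_le).trans ?_
          have : ((X - C β) ^ e).natDegree ≤ e := by
            simp [natDegree_X_sub_C]
          omega
        omega
    have main : ∑ α : F, ∑ i ∈ Finset.range t,
        P.eval α * z ^ q ^ i * (α - β) ^ (q ^ i - 1) = 0 := by
      rw [Finset.sum_comm]
      refine Finset.sum_eq_zero fun i hi => ?_
      have heq : ∀ α : F, P.eval α * z ^ q ^ i * (α - β) ^ (q ^ i - 1)
          = z ^ q ^ i * (P * (X - C β) ^ (q ^ i - 1)).eval α := by
        intro α
        simp only [eval_mul, eval_pow, eval_sub, eval_X, eval_C]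
        ring
      rw [Finset.sum_congr rfl fun α _ => heq α, ← Finset.mul_sum,
        sum_eval_eq_zero _ (hdegb _ ?_), mul_zero]
      have : q ^ i ≤ q ^ (t - 1) :=
        Nat.pow_le_pow_right (by omega) (by have := Finset.mem_range.1 hi; omega)
      omega
    rw [← Finset.add_sum_erase _ _ (Finset.mem_univ β)] at main
    have hβ : ∑ i ∈ Finset.range t, P.eval β * z ^ q ^ i * (β - β) ^ (q ^ i - 1)
        = z * P.eval β := by
      rw [Finset.sum_eq_single_of_mem 0 (Finset.mem_range.2 (by omega))]
      · simp [mul_comm]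
      · intro i _ hne0
        have : 2 ≤ q ^ i := by
          calc 2 ≤ q := hq2
          _ = q ^ 1 := (pow_one q).symm
          _ ≤ q ^ i := Nat.pow_le_pow_right (by omega) (by omega)
        rw [sub_self, zero_pow (by omega), mul_zero]
    have hα : ∀ α ∈ Finset.univ.erase β,
        ∑ i ∈ Finset.range t, P.eval α * z ^ q ^ i * (α - β) ^ (q ^ i - 1)
          = P.eval α * T (z * (α - β)) * (α - β)⁻¹ := by
      intro α hmem
      have hαβ : α - β ≠ 0 := sub_ne_zero.2 (Finset.ne_of_mem_erase hmem)
      rw [show T (z * (α - β)) = ∑ i ∈ Finset.range t, (z * (α - β)) ^ q ^ i from rfl,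
        Finset.mul_sum, Finset.sum_mul]
      refine Finset.sum_congr rfl fun i _ => ?_
      have h2 : (α - β) ^ q ^ i * (α - β)⁻¹ = (α - β) ^ (q ^ i - 1) := by
        rw [← pow_sub_one_mul (show q ^ i ≠ 0 by positivity) (α - β), mul_assoc,
          mul_inv_cancel₀ hαβ, mul_one]
      rw [mul_pow]
      calc P.eval α * z ^ q ^ i * (α - β) ^ (q ^ i - 1)
          = P.eval α * z ^ q ^ i * ((α - β) ^ q ^ i * (α - β)⁻¹) := by rw [h2]
        _ = P.eval α * (z ^ q ^ i * (α - β) ^ q ^ i) * (α - β)⁻¹ := by ring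
    rw [hβ, Finset.sum_congr rfl hα] at main
    exact main
  -- main argument
  intro f g hf hg H1 H2
  set h := f - g with hh
  have hhdeg : h.degree < (k : WithBot ℕ) := lt_of_le_of_lt (degree_sub_le f g) (max_lt hf hg)
  set a := h.eval αs with ha
  set b := h.eval αb with hb
  set c := αs - αb with hc
  have hc0 : c ≠ 0 := sub_ne_zero.2 hne
  have hH1 : ∀ α : F, α ≠ αs → α ≠ αb → T (τ * h.eval α * (α - αs)⁻¹) = 0 := by
    intro α h1 h2
    have he : τ * h.eval α * (α - αs)⁻¹
        = τ * f.eval α * (α - αs)⁻¹ - τ * g.eval α * (α - αs)⁻¹ := by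
      rw [hh]; simp only [eval_sub]; ring
    rw [he, hTsub]
    have := H1 α h1 h2
    rw [show T (τ * f.eval α * (α - αs)⁻¹)
        = ∑ i ∈ Finset.range t, (τ * f.eval α * (α - αs)⁻¹) ^ q ^ i from rfl,
      show T (τ * g.eval α * (α - αs)⁻¹)
        = ∑ i ∈ Finset.range t, (τ * g.eval α * (α - αs)⁻¹) ^ q ^ i from rfl, this, sub_self]
  have hH2 : ∀ α : F, α ≠ αs → α ≠ αb → T (h.eval α * (α - αb)⁻¹) = 0 := by
    intro α h1 h2
    have he : h.eval α * (α - αb)⁻¹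
        = f.eval α * (α - αb)⁻¹ - g.eval α * (α - αb)⁻¹ := by
      rw [hh]; simp only [eval_sub]; ring
    rw [he, hTsub]
    have := H2 α h1 h2
    rw [show T (f.eval α * (α - αb)⁻¹)
        = ∑ i ∈ Finset.range t, (f.eval α * (α - αb)⁻¹) ^ q ^ i from rfl,
      show T (g.eval α * (α - αb)⁻¹)
        = ∑ i ∈ Finset.range t, (g.eval α * (α - αb)⁻¹) ^ q ^ i from rfl, this, sub_self]
  -- step 1 : b = -(s * c) with s = T (a * c⁻¹)
  set s : F := T (a * c⁻¹) with hs
  have hsfix' : s ^ q = s := hTfix _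
  have step1 : b + s * c = 0 := by
    refine nondeg _ fun z => ?_
    have key := hkey h hhdeg αb z
    have hαs_mem : αs ∈ Finset.univ.erase αb := Finset.mem_erase.2 ⟨hne, Finset.mem_univ αs⟩
    rw [← Finset.add_sum_erase _ _ hαs_mem] at key
    -- apply T to key
    have := congrArg T key
    rw [hT0, hTadd, hTadd, hTsum] at this
    have hrest : ∑ α ∈ (Finset.univ.erase αb).erase αs,
        T (h.eval α * T (z * (α - αb)) * (α - αb)⁻¹) = 0 := by
      refine Finset.sum_eq_zero fun α hmem => ?_
      have hα2 : α ≠ αb := Finset.ne_of_mem_erase (Finset.mem_of_mem_erase hmem)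
      have hα1 : α ≠ αs := Finset.ne_of_mem_erase hmem
      have hre : h.eval α * T (z * (α - αb)) * (α - αb)⁻¹
          = T (z * (α - αb)) * (h.eval α * (α - αb)⁻¹) := by ring
      rw [hre, hTsmul _ _ (hTfix _), hH2 α hα1 hα2, mul_zero]
    rw [hrest, add_zero] at this
    -- this : T (z * b) + T (a * T (z * c) * c⁻¹) = 0   (with αs - αb = c)
    have hterm : T (h.eval αs * T (z * (αs - αb)) * (αs - αb)⁻¹) = T (z * c) * s := by
      have hre : h.eval αs * T (z * (αs - αb)) * (αs - αb)⁻¹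
          = T (z * c) * (a * c⁻¹) := by rw [← hc, ← ha]; ring
      rw [hre, hTsmul _ _ (hTfix _), ← hs]
    rw [hterm] at this
    -- this : T (z * b) + T (z * c) * s = 0
    have hfin : T (z * (b + s * c)) = T (z * b) + T (z * c) * s := by
      have h1 : z * (b + s * c) = z * b + s * (z * c) := by ring
      rw [h1, hTadd, hTsmul _ _ hsfix']
      ring
    rw [hfin, this]
  -- step 2 : τ * a = s₂ * c with s₂ = T (τ * b * (αb - αs)⁻¹)
  set s₂ : F := T (τ * b * (αb - αs)⁻¹) with hs₂
  have step2 : τ * a - s₂ * c = 0 := by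
    refine nondeg _ fun z => ?_
    have key := hkey h hhdeg αs z
    have hαb_mem : αb ∈ Finset.univ.erase αs :=
      Finset.mem_erase.2 ⟨Ne.symm hne, Finset.mem_univ αb⟩
    rw [← Finset.add_sum_erase _ _ hαb_mem] at key
    have key' := congrArg (fun w => τ * w) key
    simp only [mul_zero, mul_add, Finset.mul_sum] at key'
    have := congrArg T key'
    rw [hT0, hTadd, hTadd, hTsum] at this
    have hrest : ∑ α ∈ (Finset.univ.erase αs).erase αb,
        T (τ * (h.eval α * T (z * (α - αs)) * (α - αs)⁻¹)) = 0 := by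
      refine Finset.sum_eq_zero fun α hmem => ?_
      have hα1 : α ≠ αs := Finset.ne_of_mem_erase (Finset.mem_of_mem_erase hmem)
      have hα2 : α ≠ αb := Finset.ne_of_mem_erase hmem
      have hre : τ * (h.eval α * T (z * (α - αs)) * (α - αs)⁻¹)
          = T (z * (α - αs)) * (τ * h.eval α * (α - αs)⁻¹) := by ring
      rw [hre, hTsmul _ _ (hTfix _), hH1 α hα1 hα2, mul_zero]
    rw [hrest, add_zero] at this
    have hterm : T (τ * (h.eval αb * T (z * (αb - αs)) * (αb - αs)⁻¹))
        = T (z * (αb - αs)) * s₂ := by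
      have hre : τ * (h.eval αb * T (z * (αb - αs)) * (αb - αs)⁻¹)
          = T (z * (αb - αs)) * (τ * b * (αb - αs)⁻¹) := by rw [← hb]; ring
      rw [hre, hTsmul _ _ (hTfix _), ← hs₂]
    rw [hterm] at this
    -- this : T (τ * (z * a)) + T (z * (αb - αs)) * s₂ = 0
    have hfin : T (z * (τ * a - s₂ * c)) = T (τ * (z * a)) + T (z * (αb - αs)) * s₂ := by
      have h1 : z * (τ * a - s₂ * c) = τ * (z * a) + s₂ * (z * (αb - αs)) := by
        rw [hc]; ring
      rw [h1, hTadd, hTsmul _ _ (hTfix _)]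
      ring
    rw [hfin, this]
  -- compute s₂ = 0
  have hbval : b = -(s * c) := by linear_combination step1
  have hs₂0 : s₂ = 0 := by
    have h1 : τ * b * (αb - αs)⁻¹ = s * τ := by
      rw [hbval, show αb - αs = -c by rw [hc]; ring]
      field_simp
    rw [hs₂, h1, hTsmul _ _ hsfix', hTτ, mul_zero]
  have ha0 : a = 0 := by
    have : τ * a = 0 := by rw [← step2, hs₂0]; ring
    exact (mul_eq_zero.1 this).resolve_left hτ0
  have hb0 : b = 0 := by
    rw [hbval, hs, ha0, zero_mul, hT0, zero_mul, neg_zero]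
  constructor
  · exact sub_eq_zero.1 (by rw [← eval_sub, ← hh, ← ha, ha0])
  · exact sub_eq_zero.1 (by rw [← eval_sub, ← hh, ← hb, hb0])
end
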